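/- Pure multiple-choice bound: suppose |V_c| = 1 for every prompt c and let C := min_c |E_c| + 1 be the number of choices. Then for every parameter θ, the generative error rate of p̂_θ satisfies err ≥ 2·(1 − 1/C)·opt(G), where opt(G) := min_{g ∈ G} Pr_{x∼D}[g(x) ≠ f(x)] is the smallest misclassification rate achievable by any thresholded-language-model classifier in the family G. -/

import Mathlib

open Finset

open scoped Classical

open MeasureTheory

lemma helper_ge (p A : ℝ) (hp0 : 0 ≤ p) (hp1 : p ≤ 1) :
    ∫ t in Set.Ioc (0:ℝ) 1, (if p ≤ t then A else 0) = (1 - p) * A := by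
  have hfun : (fun t : ℝ => if p ≤ t then A else 0)
      = Set.indicator (Set.Ici p) (fun _ => A) := by
    ext t; simp [Set.indicator_apply]
  rw [hfun, setIntegral_indicator measurableSet_Ici, setIntegral_const]
  have hvol : volume (Set.Ioc (0:ℝ) 1 ∩ Set.Ici p) = ENNReal.ofReal (1 - p) := by
    apply le_antisymm
    · calc volume (Set.Ioc (0:ℝ) 1 ∩ Set.Ici p) ≤ volume (Set.Icc p 1) := by
            apply measure_mono; rintro t ⟨⟨_, ht1⟩, htp⟩; exact ⟨htp, ht1⟩
      _ = ENNReal.ofReal (1 - p) := Real.volume_Icc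
    · calc ENNReal.ofReal (1 - p) = volume (Set.Ioc p 1) := Real.volume_Ioc.symm
      _ ≤ volume (Set.Ioc (0:ℝ) 1 ∩ Set.Ici p) := by
            apply measure_mono; rintro t ⟨htp, ht1⟩
            exact ⟨⟨lt_of_le_of_lt hp0 htp, ht1⟩, le_of_lt htp⟩
  rw [measureReal_def, hvol, ENNReal.toReal_ofReal (by linarith), smul_eq_mul]

lemma helper_gt (p B : ℝ) (hp0 : 0 ≤ p) (hp1 : p ≤ 1) :
    ∫ t in Set.Ioc (0:ℝ) 1, (if p > t then B else 0) = p * B := by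
  have hfun : (fun t : ℝ => if p > t then B else 0)
      = Set.indicator (Set.Iio p) (fun _ => B) := by
    ext t; simp [Set.indicator_apply]
  rw [hfun, setIntegral_indicator measurableSet_Iio, setIntegral_const]
  have hvol : volume (Set.Ioc (0:ℝ) 1 ∩ Set.Iio p) = ENNReal.ofReal p := by
    apply le_antisymm
    · calc volume (Set.Ioc (0:ℝ) 1 ∩ Set.Iio p) ≤ volume (Set.Icc 0 p) := by
            apply measure_mono; rintro t ⟨⟨ht0, _⟩, htp⟩
            exact ⟨le_of_lt ht0, le_of_lt htp⟩
      _ = ENNReal.ofReal p := by rw [Real.volume_Icc]; ring_nf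
    · calc ENNReal.ofReal p = volume (Set.Ioo (0:ℝ) p) := by rw [Real.volume_Ioo]; ring_nf
      _ ≤ volume (Set.Ioc (0:ℝ) 1 ∩ Set.Iio p) := by
            apply measure_mono; rintro t ⟨ht0, htp⟩
            exact ⟨⟨ht0, le_trans (le_of_lt htp) hp1⟩, htp⟩
  rw [measureReal_def, hvol, ENNReal.toReal_ofReal hp0, smul_eq_mul]

lemma helper_int_ge (p A : ℝ) :
    IntegrableOn (fun t : ℝ => if p ≤ t then A else 0) (Set.Ioc (0:ℝ) 1) := by
  have hfun : (fun t : ℝ => if p ≤ t then A else 0)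
      = Set.indicator (Set.Ici p) (fun _ => A) := by
    ext t; simp [Set.indicator_apply]
  rw [hfun]
  exact (integrableOn_const (by simp [Real.volume_Ioc])).indicator
    measurableSet_Ici

lemma helper_int_gt (p B : ℝ) :
    IntegrableOn (fun t : ℝ => if p > t then B else 0) (Set.Ioc (0:ℝ) 1) := by
  have hfun : (fun t : ℝ => if p > t then B else 0)
      = Set.indicator (Set.Iio p) (fun _ => B) := by
    ext t; simp [Set.indicator_apply]
  rw [hfun]
  exact (integrableOn_const (by simp [Real.volume_Ioc])).indicator
    measurableSet_Iio


/-- (Theorem 2 of the paper: pure multiple choice / agnostic bound.)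
Each prompt `c` has a single valid response `a c` among the plausible responses `Rset c`;
`Cnum := min_c |E_c| + 1` is the number of choices.  For the family
`G = {g_{θ,t}}` of thresholded-language-model classifiers, every model in the family
`phat θ` satisfies `err(θ) ≥ 2·(1 − 1/Cnum)·opt(G)`. -/
theorem stmt4 {C R Θ : Type} [Fintype C] [Nonempty C] [Fintype R]
    (μ : C → ℝ) (hμ0 : ∀ c, 0 ≤ μ c) (hμ1 : ∑ c, μ c = 1)
    (Rset : C → Finset R) (a : C → R)
    (ha : ∀ c, a c ∈ Rset c)
    -- the erroneous responses E_c = R_c \ {a_c} are nonempty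
    (hEne : ∀ c, (Rset c \ {a c}).Nonempty)
    (phat : Θ → C → R → ℝ)
    (hphat0 : ∀ θ c r, 0 ≤ phat θ c r)
    (hphat1 : ∀ θ c, ∑ r ∈ Rset c, phat θ c r = 1)
    (hphatsupp : ∀ θ c, ∀ r ∉ Rset c, phat θ c r = 0) :
    -- number of choices C = min_c |E_c| + 1
    let Cnum : ℕ := (Finset.univ.inf' Finset.univ_nonempty
      (fun c => (Rset c \ {a c}).card)) + 1
    -- D: with prob 1/2 draw c ∼ μ and r = a_c; with prob 1/2 draw c ∼ μ and r uniform in E_c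
    let D : C → R → ℝ := fun c r => (if r = a c then μ c / 2 else 0) +
      (if r ∈ Rset c \ {a c} then μ c / (2 * ((Rset c \ {a c}).card : ℝ)) else 0)
    -- misclassification rate of the thresholded classifier g_{θ,t}
    let erriv : Θ → ℝ → ℝ := fun θ t => ∑ c, ∑ r ∈ Rset c,
      if (r = a c ∧ ¬ (phat θ c r > t)) ∨ (r ≠ a c ∧ phat θ c r > t) then D c r else 0
    -- opt(G): smallest misclassification rate over the family G = {g_{θ,t} : θ ∈ Θ, t ∈ [0,1]}
    let opt : ℝ := sInf {x : ℝ | ∃ θ : Θ, ∃ t ∈ Set.Icc (0 : ℝ) 1, x = erriv θ t}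
    -- generative error rate of phat θ
    let err : Θ → ℝ := fun θ => ∑ c, μ c * ∑ r ∈ Rset c \ {a c}, phat θ c r
    ∀ θ : Θ, err θ ≥ 2 * (1 - 1 / (Cnum : ℝ)) * opt := by
  intro Cnum D erriv opt err θ
  set m : ℕ := Finset.univ.inf' Finset.univ_nonempty
      (fun c => (Rset c \ {a c}).card) with hm_def
  have he1 : ∀ c : C, 1 ≤ (Rset c \ {a c}).card := fun c => Finset.card_pos.mpr (hEne c)
  have hm1 : 1 ≤ m := Finset.le_inf' _ _ (fun c _ => he1 c)
  have hmle : ∀ c : C, m ≤ (Rset c \ {a c}).card := fun c => Finset.inf'_le _ (Finset.mem_univ c)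
  have hple : ∀ c r, r ∈ Rset c → phat θ c r ≤ 1 := by
    intro c r hr
    calc phat θ c r ≤ ∑ r' ∈ Rset c, phat θ c r' :=
          Finset.single_le_sum (fun r' _ => hphat0 θ c r') hr
      _ = 1 := hphat1 θ c
  have hsumE : ∀ c, ∑ r ∈ Rset c \ {a c}, phat θ c r = 1 - phat θ c (a c) := by
    intro c
    have h := Finset.sum_eq_sum_sdiff_singleton_add (ha c) (phat θ c)
    rw [hphat1 θ c] at h
    linarith
  -- pointwise simplification of erriv θ
  have hF : ∀ t : ℝ, erriv θ t = ∑ c,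
      ((∑ r ∈ Rset c \ {a c},
          if phat θ c r > t then μ c / (2 * ((Rset c \ {a c}).card : ℝ)) else 0)
        + (if phat θ c (a c) ≤ t then μ c / 2 else 0)) := by
    intro t
    simp only [erriv]
    apply Finset.sum_congr rfl
    intro c _
    rw [Finset.sum_eq_sum_sdiff_singleton_add (ha c)]
    congr 1
    · apply Finset.sum_congr rfl
      intro r hr
      have hrne : r ≠ a c := by
        rw [Finset.mem_sdiff, Finset.mem_singleton] at hr
        exact hr.2
      have hmem : r ∈ Rset c := (Finset.mem_sdiff.mp hr).1
      simp [D, hrne, hr, hmem]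
    · simp [D, not_lt]
  have hD0 : ∀ c r, 0 ≤ D c r := by
    intro c r
    have h1 : (0:ℝ) ≤ μ c / 2 := div_nonneg (hμ0 c) (by norm_num)
    have h2 : (0:ℝ) ≤ μ c / (2 * ((Rset c \ {a c}).card : ℝ)) :=
      div_nonneg (hμ0 c) (by positivity)
    simp only [D]
    apply add_nonneg
    · split
      · exact h1
      · exact le_rfl
    · split
      · exact h2
      · exact le_rfl
  -- the probability measure on thresholds
  set ν : Measure ℝ := volume.restrict (Set.Ioc (0:ℝ) 1) with hν
  haveI : IsProbabilityMeasure ν := ⟨by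
    rw [hν, Measure.restrict_apply_univ, Real.volume_Ioc]; norm_num⟩
  have hintc : ∀ c : C, Integrable (fun t : ℝ =>
      (∑ r ∈ Rset c \ {a c},
          if phat θ c r > t then μ c / (2 * ((Rset c \ {a c}).card : ℝ)) else 0)
        + (if phat θ c (a c) ≤ t then μ c / 2 else 0)) ν := fun c =>
    (integrable_finset_sum _ (fun r _ => helper_int_gt _ _)).add (helper_int_ge _ _)
  have hInt : Integrable (fun t => erriv θ t) ν := by
    rw [funext hF]
    exact integrable_finset_sum _ (fun c _ => hintc c)
  have hIval : ∫ t, erriv θ t ∂ν = ∑ c,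
      ((∑ r ∈ Rset c \ {a c},
          phat θ c r * (μ c / (2 * ((Rset c \ {a c}).card : ℝ))))
        + (1 - phat θ c (a c)) * (μ c / 2)) := by
    have h1 : ∫ t, erriv θ t ∂ν = ∫ t, (∑ c,
        ((∑ r ∈ Rset c \ {a c},
            if phat θ c r > t then μ c / (2 * ((Rset c \ {a c}).card : ℝ)) else 0)
          + (if phat θ c (a c) ≤ t then μ c / 2 else 0))) ∂ν := by
      simp only [hF]
    rw [h1, integral_finset_sum _ (fun c _ => hintc c)]
    apply Finset.sum_congr rfl
    intro c _
    rw [integral_add (integrable_finset_sum _ (fun r _ => helper_int_gt _ _))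
      (helper_int_ge _ _),
      integral_finset_sum _ (fun r _ => helper_int_gt _ _)]
    congr 1
    · apply Finset.sum_congr rfl
      intro r hr
      have hrmem : r ∈ Rset c := (Finset.mem_sdiff.mp hr).1
      exact helper_gt _ _ (hphat0 θ c r) (hple c r hrmem)
    · exact helper_ge _ _ (hphat0 θ c (a c)) (hple c (a c) (ha c))
  obtain ⟨t, htN, htle⟩ := exists_notMem_null_le_integral (μ := ν) hInt
    (N := (Set.Ioc (0:ℝ) 1)ᶜ)
    (by rw [hν, Measure.restrict_apply measurableSet_Ioc.compl]; simp)
  rw [Set.notMem_compl_iff] at htN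
  have hopt : opt ≤ erriv θ t := by
    apply csInf_le
    · refine ⟨0, ?_⟩
      rintro x ⟨θ', t', _, rfl⟩
      apply Finset.sum_nonneg
      intro c _
      apply Finset.sum_nonneg
      intro r _
      split
      · exact hD0 c r
      · exact le_rfl
    · exact ⟨θ, t, ⟨le_of_lt htN.1, htN.2⟩, rfl⟩
  -- bound the integral
  have hM1 : (1:ℝ) ≤ (m:ℝ) := by exact_mod_cast hm1
  have hbound : ∫ t, erriv θ t ∂ν ≤ ∑ c, μ c * (1 - phat θ c (a c)) * ((m:ℝ)+1)/(2*(m:ℝ)) := by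
    rw [hIval]
    apply Finset.sum_le_sum
    intro c _
    have hec : (m:ℝ) ≤ ((Rset c \ {a c}).card : ℝ) := by exact_mod_cast hmle c
    have hpa1 : phat θ c (a c) ≤ 1 := hple c (a c) (ha c)
    have hμc := hμ0 c
    rw [← Finset.sum_mul, hsumE c]
    have h1 : μ c / (2 * ((Rset c \ {a c}).card : ℝ)) ≤ μ c / (2 * (m:ℝ)) := by
      gcongr
      all_goals linarith
    have h2 : (1 - phat θ c (a c)) * (μ c / (2 * ((Rset c \ {a c}).card : ℝ)))
        ≤ (1 - phat θ c (a c)) * (μ c / (2 * (m:ℝ))) := by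
      apply mul_le_mul_of_nonneg_left h1 (by linarith)
    have heq : (1 - phat θ c (a c)) * (μ c / (2 * (m:ℝ))) + (1 - phat θ c (a c)) * (μ c / 2)
        = μ c * (1 - phat θ c (a c)) * ((m:ℝ)+1)/(2*(m:ℝ)) := by
      field_simp
      ring
    linarith
  have herr : err θ = ∑ c, μ c * (1 - phat θ c (a c)) := by
    simp only [err]
    exact Finset.sum_congr rfl (fun c _ => by rw [hsumE c])
  have hsum_eq : ∑ c, μ c * (1 - phat θ c (a c)) * ((m:ℝ)+1)/(2*(m:ℝ))
      = err θ * (((m:ℝ)+1)/(2*(m:ℝ))) := by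
    rw [herr, Finset.sum_mul]
    apply Finset.sum_congr rfl
    intro c _
    ring
  have hopt2 : opt ≤ err θ * (((m:ℝ)+1)/(2*(m:ℝ))) := by
    rw [← hsum_eq]
    exact le_trans hopt (le_trans htle hbound)
  -- final algebra
  have hCnum : (Cnum : ℝ) = (m:ℝ) + 1 := by
    have h : (Cnum : ℝ) = ((m + 1 : ℕ) : ℝ) := rfl
    rw [h]
    push_cast
    ring
  rw [ge_iff_le, hCnum]
  have hfac : (0:ℝ) ≤ 2 * (1 - 1 / ((m:ℝ)+1)) := by
    have : 1 / ((m:ℝ)+1) ≤ 1 := by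
      rw [div_le_one (by linarith)]
      linarith
    linarith
  calc 2 * (1 - 1 / ((m:ℝ)+1)) * opt
      ≤ 2 * (1 - 1 / ((m:ℝ)+1)) * (err θ * (((m:ℝ)+1)/(2*(m:ℝ)))) :=
        mul_le_mul_of_nonneg_left hopt2 hfac
    _ = err θ := by
        field_simp
        ring
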